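/- Let S be the smallest set of pairs of integers that contains (3,1) and is closed under the three maps (m,n) ↦ (2m+n, m), (m,n) ↦ (2n+m, n), and (m,n) ↦ (2m-n, m). If m and n are odd integers with m > n ≥ 1 and gcd(m,n) = 1, then (m,n) ∈ S. -/

import Mathlib

private lemma tree31_aux (T : Set (ℤ × ℤ)) (h31 : ((3 : ℤ), (1 : ℤ)) ∈ T)
    (hcl : ∀ m n : ℤ, (m, n) ∈ T →
      (2 * m + n, m) ∈ T ∧ (2 * n + m, n) ∈ T ∧ (2 * m - n, m) ∈ T) :
    ∀ k : ℕ, ∀ m n : ℤ, m.toNat = k → Odd m → Odd n → m > n → n ≥ 1 →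
      Int.gcd m n = 1 → (m, n) ∈ T := by
  intro k
  induction k using Nat.strong_induction_on with
  | _ k ih =>
    intro m n hk hm hn hmn hn1 hg
    obtain ⟨a, ha⟩ := hm
    obtain ⟨b, hb⟩ := hn
    have hcop : IsCoprime m n := Int.isCoprime_iff_gcd_eq_one.mpr hg
    rcases lt_trichotomy m (3 * n) with h3 | h3 | h3
    · -- m < 3n
      rcases lt_trichotomy m (2 * n) with h2 | h2 | h2
      · -- m < 2n : parent (n, 2n - m), child 3
        have hpar : (n, 2 * n - m) ∈ T := by
          apply ih n.toNat (by omega) n (2 * n - m) rfl ⟨b, hb⟩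
            ⟨n - a - 1, by omega⟩ (by omega) (by omega)
          have : IsCoprime n (2 * n - m) := by
            have := (hcop.symm.neg_right).add_mul_left_right 2
            convert this using 1; rfl; ring
          exact Int.isCoprime_iff_gcd_eq_one.mp this
        have := (hcl n (2 * n - m) hpar).2.2
        convert this using 2 <;> ring
      · omega
      · -- 2n < m < 3n : parent (n, m - 2n), child 1
        have hpar : (n, m - 2 * n) ∈ T := by
          apply ih n.toNat (by omega) n (m - 2 * n) rfl ⟨b, hb⟩
            ⟨a - n, by omega⟩ (by omega) (by omega)
          have : IsCoprime n (m - 2 * n) := by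
            have := hcop.symm.add_mul_left_right (-2)
            convert this using 1; rfl; ring
          exact Int.isCoprime_iff_gcd_eq_one.mp this
        have := (hcl n (m - 2 * n) hpar).1
        convert this using 2 <;> ring
    · -- m = 3n : forces n = 1, m = 3
      have hn1' : n = 1 := by
        have : Int.gcd (3 * n) n = n.natAbs := by
          simp [Int.gcd, Int.natAbs_mul]
        rw [h3, this] at hg
        omega
      have : m = 3 := by omega
      rw [this, hn1']; exact h31
    · -- m > 3n : parent (m - 2n, n), child 2
      have hpar : (m - 2 * n, n) ∈ T := by
        apply ih (m - 2 * n).toNat (by omega) (m - 2 * n) n rfl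
          ⟨a - n, by omega⟩ ⟨b, hb⟩ (by omega) hn1
        have : IsCoprime (m - 2 * n) n := by
          have := hcop.add_mul_left_left (-2)
          convert this using 1; rfl; ring
        exact Int.isCoprime_iff_gcd_eq_one.mp this
      have := (hcl (m - 2 * n) n hpar).2.1
      convert this using 2 <;> ring

theorem tree31_complete (S : Set (ℤ × ℤ))
    (hS : S = ⋂₀ {T : Set (ℤ × ℤ) | ((3 : ℤ), (1 : ℤ)) ∈ T ∧
      ∀ m n : ℤ, (m, n) ∈ T →
        (2 * m + n, m) ∈ T ∧ (2 * n + m, n) ∈ T ∧ (2 * m - n, m) ∈ T})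
    (m n : ℤ) (hodd_m : Odd m) (hodd_n : Odd n)
    (hmn : m > n) (hn : n ≥ 1) (hgcd : Int.gcd m n = 1) :
    (m, n) ∈ S := by
  subst hS
  intro T hT
  exact tree31_aux T hT.1 hT.2 m.toNat m n rfl hodd_m hodd_n hmn hn hgcd
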